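/- Suppose the equation x'(t) = L(t)x_t is shadowable and C = 𝒮(0) ⊕ 𝒰 with 𝒰 finite-dimensional. Then for each bounded continuous z : [0,∞) → ℝ^d there is a unique bounded continuous x : [-r,∞) → ℝ^d with x_0 ∈ 𝒰, differentiable on [0,∞), satisfying x'(t) = L(t)x_t + z(t) for t ≥ 0; moreover there is a constant A > 0 independent of z with sup_{t≥−r}|x(t)| ≤ A · sup_{t≥0}|z(t)|. -/

import Mathlib

open Set

noncomputable section

/-- The Euclidean state space ℝ^d. -/
abbrev Rd (d : ℕ) : Type := EuclideanSpace ℝ (Fin d)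

/-- The phase space C = C([-r,0], ℝ^d) with the supremum norm. -/
abbrev Ph (d : ℕ) (r : ℝ) : Type := C(Set.Icc (-r) (0:ℝ), Rd d)

/-- The segment x_t ∈ C of a continuous function x : ℝ → ℝ^d, x_t(θ) = x(t+θ). -/
def seg (d : ℕ) (r : ℝ) (x : ℝ → Rd d) (hx : Continuous x) (t : ℝ) : Ph d r :=
  ⟨fun θ => x (t + θ.1), hx.comp (continuous_const.add continuous_subtype_val)⟩

/-- `x` is a solution of x'(t) = L(t)x_t on [s, ∞) (right-hand derivative at s). -/
def IsSol (d : ℕ) (r : ℝ) (L : ℝ → (Ph d r →L[ℝ] Rd d)) (s : ℝ)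
    (x : ℝ → Rd d) (hx : Continuous x) : Prop :=
  ∀ t, s ≤ t → HasDerivWithinAt x (L t (seg d r x hx t)) (Set.Ici s) t

/-- `T` is the solution operator family of x'(t) = L(t)x_t :
for every s ≥ 0 and φ ∈ C there is a solution x on [s,∞) with x_s = φ and x_t = T(t,s)φ. -/
def IsSolOp (d : ℕ) (r : ℝ) (L : ℝ → (Ph d r →L[ℝ] Rd d))
    (T : ℝ → ℝ → (Ph d r →L[ℝ] Ph d r)) : Prop :=
  ∀ s, 0 ≤ s → ∀ φ : Ph d r, ∃ (x : ℝ → Rd d) (hx : Continuous x),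
    IsSol d r L s x hx ∧ seg d r x hx s = φ ∧ ∀ t, s ≤ t → seg d r x hx t = T t s φ

/-- The evolution family property of the solution operators. -/
def Cocycle (d : ℕ) (r : ℝ) (T : ℝ → ℝ → (Ph d r →L[ℝ] Ph d r)) : Prop :=
  (∀ s, 0 ≤ s → T s s = ContinuousLinearMap.id ℝ (Ph d r)) ∧
  ∀ τ t s, 0 ≤ s → s ≤ t → t ≤ τ → T τ s = (T τ t).comp (T t s)

/-- Uniqueness of solutions with a given initial segment at time s. -/
def UniqueSol (d : ℕ) (r : ℝ) (L : ℝ → (Ph d r →L[ℝ] Rd d)) : Prop :=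
  ∀ s, 0 ≤ s → ∀ (x y : ℝ → Rd d) (hx : Continuous x) (hy : Continuous y),
    IsSol d r L s x hx → IsSol d r L s y hy → seg d r x hx s = seg d r y hy s →
    ∀ t, s - r ≤ t → x t = y t

/-- Eq. x'(t) = L(t)x_t is shadowable. -/
def Shadowable (d : ℕ) (r : ℝ) (L : ℝ → (Ph d r →L[ℝ] Rd d)) : Prop :=
  ∀ ε, 0 < ε → ∃ δ, 0 < δ ∧ ∀ (y yd : ℝ → Rd d) (hy : Continuous y),
    ContinuousOn yd (Set.Ici 0) →
    (∀ t, 0 ≤ t → HasDerivWithinAt y (yd t) (Set.Ici 0) t) →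
    (∀ t, 0 ≤ t → ‖yd t - L t (seg d r y hy t)‖ ≤ δ) →
    ∃ (x : ℝ → Rd d) (hx : Continuous x), IsSol d r L 0 x hx ∧
      ∀ t, 0 ≤ t → ‖seg d r x hx t - seg d r y hy t‖ ≤ ε

/-- Eq. x'(t) = L(t)x_t is Hyers–Ulam stable. -/
def HyersUlam (d : ℕ) (r : ℝ) (L : ℝ → (Ph d r →L[ℝ] Rd d)) : Prop :=
  ∃ κ, 0 < κ ∧ ∀ δ, 0 < δ → ∀ (y yd : ℝ → Rd d) (hy : Continuous y),
    ContinuousOn yd (Set.Ici 0) →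
    (∀ t, 0 ≤ t → HasDerivWithinAt y (yd t) (Set.Ici 0) t) →
    (∀ t, 0 ≤ t → ‖yd t - L t (seg d r y hy t)‖ ≤ δ) →
    ∃ (x : ℝ → Rd d) (hx : Continuous x), IsSol d r L 0 x hx ∧
      ∀ t, 0 ≤ t → ‖seg d r x hx t - seg d r y hy t‖ ≤ κ * δ

/-- The stable subspace 𝒮(s) = {φ ∈ C : sup_{t ≥ s} ‖T(t,s)φ‖ < ∞}. -/
def stableSub (d : ℕ) (r : ℝ) (T : ℝ → ℝ → (Ph d r →L[ℝ] Ph d r)) (s : ℝ) :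
    Submodule ℝ (Ph d r) where
  carrier := {φ | ∃ M, ∀ t, s ≤ t → ‖T t s φ‖ ≤ M}
  add_mem' := by
    rintro a b ⟨Ma, hMa⟩ ⟨Mb, hMb⟩
    refine ⟨Ma + Mb, fun t ht => ?_⟩
    calc ‖T t s (a + b)‖ = ‖T t s a + T t s b‖ := by rw [map_add]
    _ ≤ ‖T t s a‖ + ‖T t s b‖ := norm_add_le _ _
    _ ≤ Ma + Mb := add_le_add (hMa t ht) (hMb t ht)
  zero_mem' := ⟨0, fun t ht => by simp⟩
  smul_mem' := by
    rintro c a ⟨Ma, hMa⟩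
    refine ⟨‖c‖ * Ma, fun t ht => ?_⟩
    rw [map_smul]
    have h1 : ‖c • (T t s) a‖ = ‖c‖ * ‖(T t s) a‖ := @norm_smul ℝ (Ph d r) _ _ _ _ c _
    rw [h1]
    exact mul_le_mul_of_nonneg_left (hMa t ht) (norm_nonneg c)

/-- Eq. x'(t) = L(t)x_t admits an exponential dichotomy (with solution operators T). -/
def ExpDich (d : ℕ) (r : ℝ) (T : ℝ → ℝ → (Ph d r →L[ℝ] Ph d r)) : Prop :=
  ∃ (P : ℝ → (Ph d r →L[ℝ] Ph d r)) (D lam : ℝ), 0 < D ∧ 0 < lam ∧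
    (∀ t, 0 ≤ t → (P t).comp (P t) = P t) ∧
    (∀ t s, 0 ≤ s → s ≤ t → (P t).comp (T t s) = (T t s).comp (P s)) ∧
    (∀ t s, 0 ≤ s → s ≤ t →
      Set.BijOn (⇑(T t s)) (LinearMap.ker (P s : Ph d r →ₗ[ℝ] Ph d r) : Set (Ph d r))
        (LinearMap.ker (P t : Ph d r →ₗ[ℝ] Ph d r) : Set (Ph d r))) ∧
    (∀ t s, 0 ≤ s → s ≤ t → ‖(T t s).comp (P s)‖ ≤ D * Real.exp (-lam * (t - s))) ∧
    (∀ t s, 0 ≤ t → t ≤ s → ∀ φ ∈ LinearMap.ker (P t : Ph d r →ₗ[ℝ] Ph d r),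
      ‖φ‖ ≤ D * Real.exp (-lam * (s - t)) * ‖T s t φ‖)

section SegLemmas

variable {d : ℕ} {r : ℝ}

lemma continuous_seg (x : ℝ → Rd d) (hx : Continuous x) :
    Continuous (fun t => seg d r x hx t) := by
  have hc : Continuous fun p : ℝ × (Set.Icc (-r) (0:ℝ)) => x (p.1 + p.2.1) :=
    hx.comp (continuous_fst.add (continuous_subtype_val.comp continuous_snd))
  exact (ContinuousMap.curry ⟨_, hc⟩).continuous.congr fun t => by
    ext θ; rfl

lemma norm_seg_le (x : ℝ → Rd d) (hx : Continuous x) (t C : ℝ) (hC : 0 ≤ C)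
    (h : ∀ τ, t - r ≤ τ → τ ≤ t → ‖x τ‖ ≤ C) : ‖seg d r x hx t‖ ≤ C :=
  (ContinuousMap.norm_le _ hC).2 fun θ => h _ (by linarith [θ.2.1]) (by linarith [θ.2.2])

lemma norm_le_norm_seg (x : ℝ → Rd d) (hx : Continuous x) (t τ : ℝ)
    (h1 : t - r ≤ τ) (h2 : τ ≤ t) : ‖x τ‖ ≤ ‖seg d r x hx t‖ := by
  have := ContinuousMap.norm_coe_le_norm (seg d r x hx t) ⟨τ - t, ⟨by linarith, by linarith⟩⟩
  simpa [seg] using this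

lemma seg_sub (x y : ℝ → Rd d) (hx : Continuous x) (hy : Continuous y) (t : ℝ) :
    seg d r (x - y) (hx.sub hy) t = seg d r x hx t - seg d r y hy t := by
  ext θ; rfl

lemma seg_add (x y : ℝ → Rd d) (hx : Continuous x) (hy : Continuous y) (t : ℝ) :
    seg d r (x + y) (hx.add hy) t = seg d r x hx t + seg d r y hy t := by
  ext θ; rfl

lemma seg_smul (c : ℝ) (x : ℝ → Rd d) (hx : Continuous x) (t : ℝ) :
    seg d r (c • x) (hx.const_smul c) t = c • seg d r x hx t := by
  ext θ; rfl

lemma seg_congr (x y : ℝ → Rd d) (hx : Continuous x) (hy : Continuous y)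
    (h : ∀ τ, x τ = y τ) (t : ℝ) : seg d r x hx t = seg d r y hy t :=
  ContinuousMap.ext fun θ => h _

end SegLemmas

section UniqLemmas

variable {d : ℕ} {r : ℝ}

/-- FTC converse: a solution satisfies the integral equation. -/
lemma sol_integral (L : ℝ → (Ph d r →L[ℝ] Rd d)) (hL : ContinuousOn L (Set.Ici 0))
    (z : ℝ → Rd d) (hz : ContinuousOn z (Set.Ici 0))
    (x : ℝ → Rd d) (hx : Continuous x)
    (hxd : ∀ t, 0 ≤ t → HasDerivWithinAt x (L t (seg d r x hx t) + z t) (Set.Ici 0) t)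
    (t : ℝ) (ht : 0 ≤ t) :
    x t = x 0 + ∫ s in (0:ℝ)..t, (L s (seg d r x hx s) + z s) := by
  have hF : ContinuousOn (fun s => L s (seg d r x hx s) + z s) (Set.Ici 0) :=
    (hL.clm_apply (continuous_seg x hx).continuousOn).add hz
  have hsub : Set.uIcc (0:ℝ) t ⊆ Set.Ici 0 := by
    rw [Set.uIcc_of_le ht]; exact fun u hu => hu.1
  have h1 : (∫ s in (0:ℝ)..t, (L s (seg d r x hx s) + z s)) = x t - x 0 :=
    intervalIntegral.integral_eq_sub_of_hasDeriv_right_of_le ht hx.continuousOn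
      (fun s hs => ((hxd s (le_of_lt hs.1)).mono
        (fun u hu => le_of_lt (lt_trans hs.1 hu))))
      ((hF.mono hsub).intervalIntegrable)
  rw [h1]; abel

/-- Uniqueness of solutions of the nonhomogeneous equation with equal initial segment. -/
lemma sol_unique (hr : 0 ≤ r) (L : ℝ → (Ph d r →L[ℝ] Rd d)) (hL : ContinuousOn L (Set.Ici 0))
    (z : ℝ → Rd d)
    (x y : ℝ → Rd d) (hx : Continuous x) (hy : Continuous y)
    (hxd : ∀ t, 0 ≤ t → HasDerivWithinAt x (L t (seg d r x hx t) + z t) (Set.Ici 0) t)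
    (hyd : ∀ t, 0 ≤ t → HasDerivWithinAt y (L t (seg d r y hy t) + z t) (Set.Ici 0) t)
    (h0 : seg d r x hx 0 = seg d r y hy 0) :
    ∀ t, -r ≤ t → x t = y t := by
  have hΔ : Continuous (x - y) := hx.sub hy
  have hΔ0 : ∀ τ, -r ≤ τ → τ ≤ 0 → (x - y) τ = 0 := by
    intro τ h1 h2
    have h3 := congrArg (fun ψ : Ph d r => ψ ⟨τ, ⟨h1, h2⟩⟩) h0
    simp only [seg, ContinuousMap.coe_mk] at h3
    simp only [Pi.sub_apply, sub_eq_zero]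
    simpa using h3
  have hΔd : ∀ t, 0 ≤ t →
      HasDerivWithinAt (x - y) (L t (seg d r (x - y) hΔ t)) (Set.Ici 0) t := by
    intro t ht
    have h1 := (hxd t ht).sub (hyd t ht)
    have hseg : seg d r (x - y) hΔ t = seg d r x hx t - seg d r y hy t :=
      seg_sub x y hx hy t
    have he : L t (seg d r x hx t) + z t - (L t (seg d r y hy t) + z t)
        = L t (seg d r (x - y) hΔ t) := by
      rw [hseg, map_sub]; abel
    exact he ▸ h1
  have hΔint : ∀ τ, 0 ≤ τ → (x - y) τ = ∫ s in (0:ℝ)..τ, L s (seg d r (x - y) hΔ s) := by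
    intro τ hτ
    have hΔd' : ∀ t, 0 ≤ t → HasDerivWithinAt (x - y)
        (L t (seg d r (x - y) hΔ t) + (fun _ => (0:Rd d)) t) (Set.Ici 0) t := by
      intro t ht; simpa using hΔd t ht
    have := sol_integral L hL (fun _ => (0:Rd d)) continuousOn_const (x - y) hΔ hΔd' τ hτ
    have h00 : (x - y) 0 = 0 := hΔ0 0 (by linarith) le_rfl
    simpa [h00] using this
  intro t htr
  rcases le_or_gt t 0 with ht | ht
  · exact sub_eq_zero.mp (hΔ0 t htr ht)
  have ht : (0:ℝ) ≤ t := le_of_lt ht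
  -- bound on ‖L‖ over [0, t]
  have hKex : ∃ K, ∀ s ∈ Set.Icc (0:ℝ) t, ‖L s‖ ≤ K :=
    IsCompact.exists_bound_of_continuousOn (f := L) isCompact_Icc (hL.mono Set.Icc_subset_Ici_self)
  obtain ⟨K, hK⟩ := hKex
  set K' := max K 0 with hK'def
  have hK'0 : (0:ℝ) ≤ K' := le_max_right _ _
  have hKb : ∀ s ∈ Set.Icc (0:ℝ) t, ‖L s‖ ≤ K' := fun s hs => le_trans (hK s hs) (le_max_left _ _)
  set g : ℝ → ℝ := fun s => ‖seg d r (x - y) hΔ s‖ with hgdef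
  have hg_cont : Continuous g := (continuous_seg (x - y) hΔ).norm
  have hg_nonneg : ∀ s, 0 ≤ g s := fun s => norm_nonneg _
  set h : ℝ → ℝ := fun u => ∫ s in (0:ℝ)..u, g s with hhdef
  have hder : ∀ u, HasDerivAt h (g u) u := fun u =>
    (hg_cont.integral_hasStrictDerivAt 0 u).hasDerivAt
  have hmono : ∀ a b : ℝ, 0 ≤ a → a ≤ b → h a ≤ h b := by
    intro a b _ hab
    have := intervalIntegral.integral_add_adjacent_intervals
      (hg_cont.intervalIntegrable 0 a) (hg_cont.intervalIntegrable a b) (μ := MeasureTheory.volume)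
    have h2 : 0 ≤ ∫ s in a..b, g s := intervalIntegral.integral_nonneg hab (fun u _ => hg_nonneg u)
    simp only [hhdef]; linarith [this]
  have hnonneg : ∀ u, 0 ≤ u → 0 ≤ h u := fun u hu =>
    intervalIntegral.integral_nonneg hu (fun s _ => hg_nonneg s)
  have hFc : ContinuousOn (fun s => L s (seg d r (x - y) hΔ s)) (Set.Ici 0) :=
    hL.clm_apply (continuous_seg (x - y) hΔ).continuousOn
  have key1 : ∀ τ, 0 ≤ τ → τ ≤ t → ‖(x - y) τ‖ ≤ K' * h τ := by
    intro τ hτ0 hτt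
    rw [hΔint τ hτ0]
    have hsub : Set.uIcc (0:ℝ) τ ⊆ Set.Ici 0 := by
      rw [Set.uIcc_of_le hτ0]; exact fun u hu => hu.1
    have hInt1 : IntervalIntegrable (fun s => ‖L s (seg d r (x - y) hΔ s)‖)
        MeasureTheory.volume 0 τ := ((hFc.mono hsub).norm).intervalIntegrable
    have e1 : ‖∫ s in (0:ℝ)..τ, L s (seg d r (x - y) hΔ s)‖
        ≤ ∫ s in (0:ℝ)..τ, ‖L s (seg d r (x - y) hΔ s)‖ :=
      intervalIntegral.norm_integral_le_integral_norm hτ0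
    have e2 : (∫ s in (0:ℝ)..τ, ‖L s (seg d r (x - y) hΔ s)‖)
        ≤ ∫ s in (0:ℝ)..τ, K' * g s := by
      apply intervalIntegral.integral_mono_on hτ0 hInt1
        ((hg_cont.intervalIntegrable 0 τ).const_mul K')
      intro s hs
      calc ‖L s (seg d r (x - y) hΔ s)‖ ≤ ‖L s‖ * g s := (L s).le_opNorm _
        _ ≤ K' * g s := by
            apply mul_le_mul_of_nonneg_right _ (hg_nonneg s)
            exact hKb s ⟨hs.1, le_trans hs.2 hτt⟩
    have e3 : (∫ s in (0:ℝ)..τ, K' * g s) = K' * h τ := by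
      rw [hhdef]; exact intervalIntegral.integral_const_mul K' g
    linarith
  have key2 : ∀ τ, 0 ≤ τ → τ ≤ t → g τ ≤ K' * h τ := by
    intro τ hτ0 hτt
    apply norm_seg_le _ _ _ _ (mul_nonneg hK'0 (hnonneg τ hτ0))
    intro u hu1 hu2
    rcases le_or_gt u 0 with hu0 | hu0
    · rw [hΔ0 u (by linarith) hu0]
      simpa using mul_nonneg hK'0 (hnonneg τ hτ0)
    · have hu0 : (0:ℝ) ≤ u := le_of_lt hu0
      calc ‖(x - y) u‖ ≤ K' * h u := key1 u hu0 (le_trans hu2 hτt)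
        _ ≤ K' * h τ := mul_le_mul_of_nonneg_left (hmono u τ hu0 hu2) hK'0
  have gron : ∀ u ∈ Set.Icc (0:ℝ) t, ‖h u‖ ≤ gronwallBound 0 K' 0 (u - 0) := by
    apply norm_le_gronwallBound_of_norm_deriv_right_le
      (fun u _ => (hder u).continuousAt.continuousWithinAt)
      (fun u _ => (hder u).hasDerivWithinAt)
    · simp [hhdef]
    · intro u hu
      rw [Real.norm_of_nonneg (hg_nonneg u), Real.norm_of_nonneg (hnonneg u hu.1)]
      have := key2 u hu.1 (le_of_lt hu.2)
      linarith
  have hht : h t = 0 := by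
    have := gron t ⟨ht, le_rfl⟩
    have h2 : gronwallBound 0 K' 0 (t - 0) = 0 := by simp [gronwallBound]
    have h3 := hnonneg t ht
    rw [h2] at this
    have := abs_le.mp (by rwa [Real.norm_eq_abs] at this)
    linarith
  have := key1 t ht le_rfl
  rw [hht] at this
  have : ‖(x - y) t‖ ≤ 0 := by linarith
  have := norm_le_zero_iff.mp this
  exact sub_eq_zero.mp this

end UniqLemmas

section ExistLemmas

variable {d : ℕ} {r : ℝ}

set_option maxHeartbeats 2000000 in
/-- Existence of a global solution of x' = L(t)x_t + z(t) with zero initial data. -/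
lemma sol_exists_zero (hr : 0 ≤ r) (L : ℝ → (Ph d r →L[ℝ] Rd d))
    (hL : ContinuousOn L (Set.Ici 0)) (z : ℝ → Rd d) (hz : Continuous z)
    (B : ℝ) (hzB : ∀ t, ‖z t‖ ≤ B) :
    ∃ (x : ℝ → Rd d) (hx : Continuous x),
      (∀ t, t ≤ 0 → x t = 0) ∧
      ∀ t, 0 ≤ t → HasDerivWithinAt x (L t (seg d r x hx t) + z t) (Set.Ici 0) t := by
  classical
  have hB0 : 0 ≤ B := le_trans (norm_nonneg (z 0)) (hzB 0)
  set Lc : ℝ → (Ph d r →L[ℝ] Rd d) := fun s => L (max s 0) with hLcdef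
  have hLc : Continuous Lc := by
    rw [hLcdef]
    exact hL.comp_continuous (g := L) (f := fun s : ℝ => max s 0)
      (continuous_id.max continuous_const) (fun s => Set.mem_Ici.mpr (le_max_right _ _))
  set nL : ℝ → ℝ := fun s => ‖Lc s‖ + 1 with hnLdef
  have hnLn : Continuous fun s => ‖Lc s‖ := Continuous.norm (E := Ph d r →L[ℝ] Rd d) hLc
  have hnLc : Continuous nL := by rw [hnLdef]; exact hnLn.add continuous_const
  have hnL1 : ∀ s, 1 ≤ nL s := fun s => by
    simp only [hnLdef]; linarith [norm_nonneg (Lc s)]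
  have hnL0 : ∀ s, 0 ≤ nL s := fun s => le_trans zero_le_one (hnL1 s)
  have hnLL : ∀ s, ‖Lc s‖ ≤ nL s := fun s => by simp only [hnLdef]; linarith
  set W : ℝ → ℝ := fun t => ∫ s in (0:ℝ)..t, 2 * nL s with hWdef
  have hWd : ∀ t, HasDerivAt W (2 * nL t) t := fun t =>
    ((continuous_const.mul hnLc : Continuous fun s => 2 * nL s).integral_hasStrictDerivAt 0 t).hasDerivAt
  have hWcont : Continuous W := continuous_iff_continuousAt.2 fun t => (hWd t).continuousAt
  have hWmono : ∀ a b : ℝ, a ≤ b → W a ≤ W b := by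
    intro a b hab
    have h1 := intervalIntegral.integral_add_adjacent_intervals
      ((continuous_const.mul hnLc : Continuous fun s => 2 * nL s).intervalIntegrable 0 a)
      ((continuous_const.mul hnLc : Continuous fun s => 2 * nL s).intervalIntegrable a b) (μ := MeasureTheory.volume)
    have h2 : 0 ≤ ∫ s in a..b, 2 * nL s :=
      intervalIntegral.integral_nonneg hab (fun u _ => by
        have := hnL0 u; linarith)
    simp only [Pi.mul_apply] at h1
    simp only [hWdef]; linarith
  set E : ℝ → ℝ := fun t => Real.exp (W t) with hEdef
  have hEpos : ∀ t, 0 < E t := fun t => Real.exp_pos _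
  have hEcont : Continuous E := Real.continuous_exp.comp hWcont
  have hEmono : ∀ a b : ℝ, a ≤ b → E a ≤ E b := fun a b hab =>
    Real.exp_le_exp.2 (hWmono a b hab)
  have hE0 : E 0 = 1 := by simp [hEdef, hWdef]
  have hE1 : ∀ t, 0 ≤ t → 1 ≤ E t := fun t ht => hE0 ▸ hEmono 0 t ht
  have hEd : ∀ s, HasDerivAt E (E s * (2 * nL s)) s := fun s => (hWd s).exp
  have keyest : ∀ t, 0 ≤ t → (∫ s in (0:ℝ)..t, nL s * E s) ≤ E t / 2 := by
    intro t ht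
    have hd : ∀ s ∈ Set.uIcc (0:ℝ) t, HasDerivAt (fun u => E u / 2) (nL s * E s) s := by
      intro s _
      have h1 := (hEd s).div_const 2
      have h2 : E s * (2 * nL s) / 2 = nL s * E s := by ring
      rw [h2] at h1; exact h1
    have hint : IntervalIntegrable (fun s => nL s * E s) MeasureTheory.volume 0 t :=
      (hnLc.mul hEcont).intervalIntegrable 0 t
    have h3 := intervalIntegral.integral_eq_sub_of_hasDerivAt hd hint
    rw [h3, hE0]
    have := (hEpos t).le
    norm_num
  -- the contraction map
  have hxgc : ∀ g : BoundedContinuousFunction ℝ (Rd d),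
      Continuous (fun t => E t • g t) := fun g => hEcont.smul g.continuous
  set Fg : BoundedContinuousFunction ℝ (Rd d) → ℝ → Rd d :=
    fun g s => Lc s (seg d r (fun t => E t • g t) (hxgc g) s) + z s with hFgdef
  have hFgc : ∀ g, Continuous (Fg g) := fun g =>
    (hLc.clm_apply (continuous_seg _ (hxgc g))).add hz
  have hsegb : ∀ (g : BoundedContinuousFunction ℝ (Rd d)) (s : ℝ), 0 ≤ s →
      ‖seg d r (fun t => E t • g t) (hxgc g) s‖ ≤ E s * ‖g‖ := by
    intro g s _
    apply norm_seg_le _ _ _ _ (mul_nonneg (hEpos s).le (norm_nonneg g))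
    intro τ _ h2
    rw [norm_smul, Real.norm_of_nonneg (hEpos τ).le]
    exact mul_le_mul (hEmono τ s h2) (g.norm_coe_le_norm τ) (norm_nonneg _) (hEpos s).le
  have intbound : ∀ (v : ℝ → Rd d), Continuous v → ∀ c : ℝ, 0 ≤ c →
      (∀ s, 0 ≤ s → ‖v s‖ ≤ c * (nL s * E s)) → ∀ t, 0 ≤ t →
      ‖∫ s in (0:ℝ)..t, v s‖ ≤ c * (E t / 2) := by
    intro v hv c hc0 hb t ht
    calc ‖∫ s in (0:ℝ)..t, v s‖ ≤ ∫ s in (0:ℝ)..t, ‖v s‖ :=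
          intervalIntegral.norm_integral_le_integral_norm ht
      _ ≤ ∫ s in (0:ℝ)..t, c * (nL s * E s) := by
          apply intervalIntegral.integral_mono_on ht (hv.norm.intervalIntegrable 0 t)
            (((hnLc.mul hEcont).intervalIntegrable 0 t).const_mul c)
          exact fun s hs => hb s hs.1
      _ = c * ∫ s in (0:ℝ)..t, nL s * E s := intervalIntegral.integral_const_mul c _
      _ ≤ c * (E t / 2) := mul_le_mul_of_nonneg_left (keyest t ht) hc0
  have hFgbound : ∀ (g : BoundedContinuousFunction ℝ (Rd d)) (s : ℝ), 0 ≤ s →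
      ‖Fg g s‖ ≤ (‖g‖ + B) * (nL s * E s) := by
    intro g s hs
    have h1 : ‖Fg g s‖ ≤ ‖Lc s‖ * ‖seg d r (fun t => E t • g t) (hxgc g) s‖ + B := by
      simp only [hFgdef]
      exact le_trans (norm_add_le _ _)
        (add_le_add ((Lc s).le_opNorm _) (hzB s))
    have h2 : ‖Lc s‖ * ‖seg d r (fun t => E t • g t) (hxgc g) s‖ ≤ nL s * (E s * ‖g‖) := by
      apply mul_le_mul (hnLL s) (hsegb g s hs) (norm_nonneg _) (hnL0 s)
    have h3 : (1:ℝ) ≤ nL s * E s :=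
      one_le_mul_of_one_le_of_one_le (hnL1 s) (hE1 s hs)
    nlinarith [norm_nonneg g, hnL0 s, (hEpos s).le]
  have hΦbdd : ∀ g : BoundedContinuousFunction ℝ (Rd d), ∀ t : ℝ,
      ‖(E t)⁻¹ • ∫ s in (0:ℝ)..(max t 0), Fg g s‖ ≤ (‖g‖ + B) / 2 := by
    intro g t
    rw [norm_smul, Real.norm_of_nonneg (inv_nonneg.2 (hEpos t).le)]
    rcases le_or_gt 0 t with ht | ht
    · rw [max_eq_left ht]
      have h1 := intbound (Fg g) (hFgc g) (‖g‖ + B) (by positivity) (hFgbound g) t ht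
      have h2 : (E t)⁻¹ * ‖∫ s in (0:ℝ)..t, Fg g s‖ ≤ (E t)⁻¹ * ((‖g‖ + B) * (E t / 2)) :=
        mul_le_mul_of_nonneg_left h1 (inv_nonneg.2 (hEpos t).le)
      have h3 : (E t)⁻¹ * ((‖g‖ + B) * (E t / 2)) = (‖g‖ + B) / 2 := by
        field_simp [(hEpos t).ne']
      linarith
    · rw [max_eq_right ht.le]
      simp only [intervalIntegral.integral_same, norm_zero, mul_zero]
      positivity
  set Φ : BoundedContinuousFunction ℝ (Rd d) → BoundedContinuousFunction ℝ (Rd d) :=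
    fun g => BoundedContinuousFunction.ofNormedAddCommGroup
      (fun t => (E t)⁻¹ • ∫ s in (0:ℝ)..(max t 0), Fg g s)
      (by
        have h1 : Continuous (fun u => ∫ s in (0:ℝ)..u, Fg g s) :=
          continuous_iff_continuousAt.2 fun u =>
            (((hFgc g).integral_hasStrictDerivAt 0 u).hasDerivAt).continuousAt
        exact (hEcont.inv₀ (fun t => (hEpos t).ne')).smul
          (h1.comp (continuous_id.max continuous_const)))
      ((‖g‖ + B) / 2) (hΦbdd g) with hΦdef
  have hΦapp : ∀ g t, Φ g t = (E t)⁻¹ • ∫ s in (0:ℝ)..(max t 0), Fg g s := fun g t => rfl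
  -- contraction estimate
  have hlip : ∀ g h : BoundedContinuousFunction ℝ (Rd d), ∀ t : ℝ,
      dist (Φ g t) (Φ h t) ≤ (1/2 : ℝ) * dist g h := by
    intro g h t
    rw [dist_eq_norm, hΦapp, hΦapp, ← smul_sub,
      ← intervalIntegral.integral_sub ((hFgc g).intervalIntegrable 0 _)
        ((hFgc h).intervalIntegrable 0 _)]
    have hwc : Continuous (fun u => E u • (g u - h u)) :=
      hEcont.smul (g.continuous.sub h.continuous)
    have hdiff : ∀ s, Fg g s - Fg h s = Lc s (seg d r (fun u => E u • (g u - h u)) hwc s) := by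
      intro s
      have e1 : seg d r (fun t => E t • g t) (hxgc g) s
            - seg d r (fun t => E t • h t) (hxgc h) s
          = seg d r (fun u => E u • (g u - h u)) hwc s := by
        rw [← seg_sub]
        apply seg_congr
        intro τ
        simp [smul_sub]
      simp only [hFgdef]
      rw [add_sub_add_right_eq_sub, ← map_sub, e1]
    have hDb : ∀ s, 0 ≤ s → ‖Fg g s - Fg h s‖ ≤ dist g h * (nL s * E s) := by
      intro s hs
      rw [hdiff s]
      have h1 : ‖seg d r (fun u => E u • (g u - h u)) hwc s‖ ≤ E s * dist g h := by
        apply norm_seg_le _ _ _ _ (mul_nonneg (hEpos s).le dist_nonneg)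
        intro τ _ h2
        rw [norm_smul, Real.norm_of_nonneg (hEpos τ).le]
        have : ‖g τ - h τ‖ = dist (g τ) (h τ) := (dist_eq_norm _ _).symm
        rw [this]
        exact mul_le_mul (hEmono τ s h2) (BoundedContinuousFunction.dist_coe_le_dist τ)
          dist_nonneg (hEpos s).le
      calc ‖Lc s (seg d r (fun u => E u • (g u - h u)) hwc s)‖
          ≤ ‖Lc s‖ * (E s * dist g h) :=
            le_trans ((Lc s).le_opNorm _) (mul_le_mul_of_nonneg_left h1 (norm_nonneg _))
        _ ≤ nL s * (E s * dist g h) :=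
            mul_le_mul_of_nonneg_right (hnLL s) (mul_nonneg (hEpos s).le dist_nonneg)
        _ = dist g h * (nL s * E s) := by ring
    have hDc : Continuous (fun s => Fg g s - Fg h s) := (hFgc g).sub (hFgc h)
    rw [norm_smul, Real.norm_of_nonneg (inv_nonneg.2 (hEpos t).le)]
    rcases le_or_gt 0 t with ht | ht
    · rw [max_eq_left ht]
      have h1 := intbound _ hDc (dist g h) dist_nonneg hDb t ht
      have h2 : (E t)⁻¹ * ‖∫ s in (0:ℝ)..t, (Fg g s - Fg h s)‖
          ≤ (E t)⁻¹ * (dist g h * (E t / 2)) :=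
        mul_le_mul_of_nonneg_left h1 (inv_nonneg.2 (hEpos t).le)
      have h3 : (E t)⁻¹ * (dist g h * (E t / 2)) = (1/2) * dist g h := by
        field_simp [(hEpos t).ne']
      linarith
    · rw [max_eq_right ht.le]
      simp only [intervalIntegral.integral_same, norm_zero, mul_zero]
      positivity
  have hcontr : ContractingWith (1/2 : NNReal) Φ := by
    constructor
    · rw [← NNReal.coe_lt_coe]
      norm_num
    · apply LipschitzWith.of_dist_le_mul
      intro g h
      apply (BoundedContinuousFunction.dist_le (by positivity)).2
      intro t
      have := hlip g h t
      have hc : ((1/2 : NNReal) : ℝ) = (1/2 : ℝ) := by norm_num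
      rw [hc]
      exact this
  set gstar := hcontr.fixedPoint Φ with hgsdef
  have hgfix : Φ gstar = gstar := hcontr.fixedPoint_isFixedPt
  set xs : ℝ → Rd d := fun t => E t • gstar t with hxsdef
  have hxs : Continuous xs := hxgc gstar
  have hfix : ∀ t, xs t = ∫ s in (0:ℝ)..(max t 0), Fg gstar s := by
    intro t
    have h1 : gstar t = (E t)⁻¹ • ∫ s in (0:ℝ)..(max t 0), Fg gstar s := by
      conv_lhs => rw [← hgfix]
      exact hΦapp gstar t
    calc xs t = E t • gstar t := rfl
      _ = E t • (E t)⁻¹ • ∫ s in (0:ℝ)..(max t 0), Fg gstar s := congrArg (fun v => E t • v) h1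
      _ = ∫ s in (0:ℝ)..(max t 0), Fg gstar s := smul_inv_smul₀ (hEpos t).ne' _
  have hFs : ∀ s, Fg gstar s = Lc s (seg d r xs hxs s) + z s := fun s => rfl
  refine ⟨xs, hxs, ?_, ?_⟩
  · intro t ht
    rw [hfix t, max_eq_right ht]
    simp
  · intro t ht
    have h1 : HasDerivAt (fun u => ∫ s in (0:ℝ)..u, Fg gstar s) (Fg gstar t) t :=
      ((hFgc gstar).integral_hasStrictDerivAt 0 t).hasDerivAt
    have h2 : HasDerivWithinAt xs (Fg gstar t) (Set.Ici 0) t := by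
      apply h1.hasDerivWithinAt.congr
      · intro u hu
        rw [hfix u, max_eq_left (hu : (0:ℝ) ≤ u)]
      · rw [hfix t, max_eq_left ht]
    have h3 : Fg gstar t = L t (seg d r xs hxs t) + z t := by
      rw [hFs t, hLcdef]
      simp only [max_eq_left ht]
    exact h3 ▸ h2

end ExistLemmas

section PerronLemmas

variable {d : ℕ} {r : ℝ}

lemma seg_zero (t : ℝ) :
    seg d r (fun _ => (0:Rd d)) continuous_const t = 0 :=
  ContinuousMap.ext fun _ => rfl

set_option maxHeartbeats 1000000 in
/-- Existence of a bounded solution with initial segment in U, clamped below -r. -/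
lemma exists_bounded_Usol (hr : 0 ≤ r) (L : ℝ → (Ph d r →L[ℝ] Rd d))
    (hL : ContinuousOn L (Set.Ici 0))
    (T : ℝ → ℝ → (Ph d r →L[ℝ] Ph d r)) (hT : IsSolOp d r L T)
    (hsh : Shadowable d r L) (U : Submodule ℝ (Ph d r))
    (hUcompl : IsCompl (stableSub d r T 0) U)
    (z : ℝ → Rd d) (hz : Continuous z) (B : ℝ) (hzB : ∀ t, ‖z t‖ ≤ B) :
    ∃ (x : ℝ → Rd d) (hx : Continuous x) (B' : ℝ),
      seg d r x hx 0 ∈ U ∧ (∀ t, ‖x t‖ ≤ B') ∧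
      (∀ t, 0 ≤ t → HasDerivWithinAt x (L t (seg d r x hx t) + z t) (Set.Ici 0) t) ∧
      (∀ t, t ≤ -r → x t = x (-r)) := by
  classical
  have hB0 : 0 ≤ B := le_trans (norm_nonneg (z 0)) (hzB 0)
  obtain ⟨y, hy, hy0, hyd⟩ := sol_exists_zero hr L hL z hz B hzB
  obtain ⟨δ, hδ, hshad⟩ := hsh 1 one_pos
  set c : ℝ := δ / (B + 1) with hcdef
  have hc : 0 < c := div_pos hδ (by linarith)
  have hcB : c * B ≤ δ := by
    rw [hcdef]
    rw [div_mul_eq_mul_div, div_le_iff₀ (by linarith : (0:ℝ) < B + 1)]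
    nlinarith
  set yb : ℝ → Rd d := c • y with hybdef
  have hyb : Continuous yb := hy.const_smul c
  set yd : ℝ → Rd d := fun t => c • (L t (seg d r y hy t) + z t) with hyddef
  have hydc : ContinuousOn yd (Set.Ici 0) := by
    rw [hyddef]
    exact ((hL.clm_apply (continuous_seg y hy).continuousOn).add hz.continuousOn).const_smul c
  have hybd : ∀ t, 0 ≤ t → HasDerivWithinAt yb (yd t) (Set.Ici 0) t :=
    fun t ht => (hyd t ht).const_smul c
  have hsegyb : ∀ t, seg d r yb hyb t = c • seg d r y hy t := fun t => seg_smul c y hy t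
  have hdefect : ∀ t, 0 ≤ t → ‖yd t - L t (seg d r yb hyb t)‖ ≤ δ := by
    intro t ht
    rw [hsegyb t, map_smul]
    have : yd t - c • (L t (seg d r y hy t)) = c • z t := by
      rw [hyddef]; simp [smul_add]
    rw [this, norm_smul, Real.norm_of_nonneg hc.le]
    calc c * ‖z t‖ ≤ c * B := mul_le_mul_of_nonneg_left (hzB t) hc.le
      _ ≤ δ := hcB
  obtain ⟨xh, hxh, hxhsol, hxhclose⟩ := hshad yb yd hyb hydc hybd hdefect
  -- the bounded solution w = y - c⁻¹ xh
  set w : ℝ → Rd d := fun t => y t - c⁻¹ • xh t with hwdef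
  have hw : Continuous w := hy.sub (hxh.const_smul c⁻¹)
  have hwseg : ∀ t, seg d r w hw t = seg d r y hy t - c⁻¹ • seg d r xh hxh t := by
    intro t
    have h1 : seg d r w hw t = seg d r y hy t
        - seg d r (c⁻¹ • xh) (hxh.const_smul c⁻¹) t := by
      rw [← seg_sub]
      apply seg_congr
      intro τ; rfl
    rw [h1, seg_smul c⁻¹ xh hxh t]
  have hwder : ∀ t, 0 ≤ t →
      HasDerivWithinAt w (L t (seg d r w hw t) + z t) (Set.Ici 0) t := by
    intro t ht
    have h1 := (hyd t ht).sub ((hxhsol t ht).const_smul c⁻¹)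
    have h2 : L t (seg d r y hy t) + z t - c⁻¹ • L t (seg d r xh hxh t)
        = L t (seg d r w hw t) + z t := by
      rw [hwseg t, map_sub, map_smul]
      abel
    rw [h2] at h1
    exact h1
  have hwb : ∀ t, 0 ≤ t → ‖seg d r w hw t‖ ≤ c⁻¹ := by
    intro t ht
    apply norm_seg_le _ _ _ _ (inv_nonneg.2 hc.le)
    intro τ h1 h2
    have hτ : w τ = -(c⁻¹ • (xh τ - yb τ)) := by
      show y τ - c⁻¹ • xh τ = -(c⁻¹ • (xh τ - (c • y) τ))
      have e1 : (c • y) τ = c • y τ := rfl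
      rw [e1, smul_sub, inv_smul_smul₀ hc.ne']
      abel
    rw [hτ, norm_neg, norm_smul, Real.norm_of_nonneg (inv_nonneg.2 hc.le)]
    have h3 : ‖xh τ - yb τ‖ ≤ 1 := by
      have e : t + (τ - t) = τ := by ring
      have h5 : xh τ - yb τ
          = (seg d r xh hxh t - seg d r yb hyb t) ⟨τ - t, ⟨by linarith, by linarith⟩⟩ := by
        show xh τ - yb τ = seg d r xh hxh t ⟨τ - t, _⟩ - seg d r yb hyb t ⟨τ - t, _⟩
        show xh τ - yb τ = xh (t + (τ - t)) - yb (t + (τ - t))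
        rw [e]
      rw [h5]
      exact le_trans (ContinuousMap.norm_coe_le_norm _ _) (hxhclose t ht)
    calc c⁻¹ * ‖xh τ - yb τ‖ ≤ c⁻¹ * 1 := mul_le_mul_of_nonneg_left h3 (inv_nonneg.2 hc.le)
      _ = c⁻¹ := mul_one _
  have hwptb : ∀ t, -r ≤ t → ‖w t‖ ≤ c⁻¹ := by
    intro t htr
    rcases le_or_gt 0 t with ht | ht
    · exact le_trans (norm_le_norm_seg (r := r) w hw t t (by linarith) le_rfl) (hwb t ht)
    · exact le_trans (norm_le_norm_seg (r := r) w hw 0 t (by linarith) ht.le) (hwb 0 le_rfl)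
  -- decompose the initial segment
  obtain ⟨ψS, ψU, hψS, hψU, hsum⟩ :=
    Submodule.codisjoint_iff_exists_add_eq.mp hUcompl.codisjoint (seg d r w hw 0)
  obtain ⟨M, hM⟩ := hψS
  obtain ⟨v, hv, hvsol, hv0, hvT⟩ := hT 0 le_rfl ψS
  set x : ℝ → Rd d := fun t => w t - v t with hxdef
  have hx : Continuous x := hw.sub hv
  have hxseg : ∀ t, seg d r x hx t = seg d r w hw t - seg d r v hv t := by
    intro t
    rw [← seg_sub]
    apply seg_congr
    intro τ; rfl
  have hxU : seg d r x hx 0 ∈ U := by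
    rw [hxseg 0, hv0]
    have : seg d r w hw 0 - ψS = ψU := by rw [← hsum]; abel
    rw [this]
    exact hψU
  have hxder : ∀ t, 0 ≤ t →
      HasDerivWithinAt x (L t (seg d r x hx t) + z t) (Set.Ici 0) t := by
    intro t ht
    have h1 := (hwder t ht).sub (hvsol t ht)
    have h2 : L t (seg d r w hw t) + z t - L t (seg d r v hv t)
        = L t (seg d r x hx t) + z t := by
      rw [hxseg t, map_sub]
      abel
    rw [h2] at h1
    exact h1
  set B' : ℝ := c⁻¹ + max M ‖ψS‖ with hB'def
  have hvptb : ∀ t, -r ≤ t → ‖v t‖ ≤ max M ‖ψS‖ := by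
    intro t htr
    rcases le_or_gt 0 t with ht | ht
    · refine le_trans (norm_le_norm_seg (r := r) v hv t t (by linarith) le_rfl) ?_
      rw [hvT t ht]
      exact le_trans (hM t ht) (le_max_left _ _)
    · refine le_trans (norm_le_norm_seg (r := r) v hv 0 t (by linarith) ht.le) ?_
      rw [hv0]
      exact le_max_right _ _
  have hxptb : ∀ t, -r ≤ t → ‖x t‖ ≤ B' := by
    intro t htr
    rw [hB'def]
    calc ‖x t‖ ≤ ‖w t‖ + ‖v t‖ := norm_sub_le _ _
      _ ≤ c⁻¹ + max M ‖ψS‖ := add_le_add (hwptb t htr) (hvptb t htr)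
  -- clamp below -r
  set xc : ℝ → Rd d := fun t => x (max t (-r)) with hxcdef
  have hxc : Continuous xc := hx.comp (continuous_id.max continuous_const)
  have hsegeq : ∀ t, 0 ≤ t → seg d r xc hxc t = seg d r x hx t := by
    intro t ht
    apply ContinuousMap.ext
    intro θ
    have : max (t + θ.1) (-r) = t + θ.1 := max_eq_left (by linarith [θ.2.1])
    show x (max (t + θ.1) (-r)) = x (t + θ.1)
    rw [this]
  refine ⟨xc, hxc, B', ?_, ?_, ?_, ?_⟩
  · rw [hsegeq 0 le_rfl]
    exact hxU
  · intro t
    have h1 : -r ≤ max t (-r) := le_max_right _ _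
    exact hxptb _ h1
  · intro t ht
    have h1 : HasDerivWithinAt xc (L t (seg d r x hx t) + z t) (Set.Ici 0) t := by
      apply (hxder t ht).congr
      · intro u hu
        show x (max u (-r)) = x u
        rw [max_eq_left (by linarith [mem_Ici.mp hu] : -r ≤ u)]
      · show x (max t (-r)) = x t
        rw [max_eq_left (by linarith : -r ≤ t)]
    rw [hsegeq t ht]
    exact h1
  · intro t ht
    show x (max t (-r)) = x (max (-r) (-r))
    rw [max_eq_right ht, max_self]

/-- Uniqueness of bounded solutions with initial segment in U. -/
lemma Usol_unique (hr : 0 ≤ r) (L : ℝ → (Ph d r →L[ℝ] Rd d))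
    (hL : ContinuousOn L (Set.Ici 0))
    (T : ℝ → ℝ → (Ph d r →L[ℝ] Ph d r)) (hT : IsSolOp d r L T)
    (U : Submodule ℝ (Ph d r)) (hUcompl : IsCompl (stableSub d r T 0) U)
    (z : ℝ → Rd d)
    (x y : ℝ → Rd d) (hx : Continuous x) (hy : Continuous y)
    (hxU : seg d r x hx 0 ∈ U) (hyU : seg d r y hy 0 ∈ U)
    (hxb : ∃ B, ∀ t, -r ≤ t → ‖x t‖ ≤ B) (hyb : ∃ B, ∀ t, -r ≤ t → ‖y t‖ ≤ B)
    (hxd : ∀ t, 0 ≤ t → HasDerivWithinAt x (L t (seg d r x hx t) + z t) (Set.Ici 0) t)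
    (hyd : ∀ t, 0 ≤ t → HasDerivWithinAt y (L t (seg d r y hy t) + z t) (Set.Ici 0) t) :
    ∀ t, -r ≤ t → x t = y t := by
  classical
  obtain ⟨Bx, hBx⟩ := hxb
  obtain ⟨By, hBy⟩ := hyb
  have hBx0 : 0 ≤ Bx := le_trans (norm_nonneg (x 0)) (hBx 0 (by linarith))
  have hBy0 : 0 ≤ By := le_trans (norm_nonneg (y 0)) (hBy 0 (by linarith))
  set φ0 : Ph d r := seg d r x hx 0 - seg d r y hy 0 with hφ0def
  have hφ0U : φ0 ∈ U := sub_mem hxU hyU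
  obtain ⟨v, hv, hvsol, hv0, hvT⟩ := hT 0 le_rfl φ0
  -- x = y + v on [-r, ∞)
  have hyv : Continuous (fun t => y t + v t) := hy.add hv
  have hyvseg : ∀ t, seg d r (fun t => y t + v t) hyv t = seg d r y hy t + seg d r v hv t := by
    intro t
    rw [← seg_add]
    apply seg_congr
    intro τ; rfl
  have hyvd : ∀ t, 0 ≤ t → HasDerivWithinAt (fun t => y t + v t)
      (L t (seg d r (fun t => y t + v t) hyv t) + z t) (Set.Ici 0) t := by
    intro t ht
    have h1 := (hyd t ht).add (hvsol t ht)
    have h2 : L t (seg d r y hy t) + z t + L t (seg d r v hv t)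
        = L t (seg d r (fun t => y t + v t) hyv t) + z t := by
      rw [hyvseg t, map_add]
      abel
    rw [h2] at h1
    exact h1
  have hseg0 : seg d r x hx 0 = seg d r (fun t => y t + v t) hyv 0 := by
    rw [hyvseg 0, hv0, hφ0def]
    abel
  have hxyv : ∀ t, -r ≤ t → x t = y t + v t :=
    sol_unique hr L hL z x (fun t => y t + v t) hx hyv hxd hyvd hseg0
  -- v is bounded, so φ0 ∈ stableSub
  have hφ0S : φ0 ∈ stableSub d r T 0 := by
    refine ⟨Bx + By, fun t ht => ?_⟩
    rw [← hvT t ht]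
    apply norm_seg_le _ _ _ _ (by linarith)
    intro τ h1 h2
    have hτr : -r ≤ τ := by linarith
    have : v τ = x τ - y τ := by rw [hxyv τ hτr]; abel
    rw [this]
    calc ‖x τ - y τ‖ ≤ ‖x τ‖ + ‖y τ‖ := norm_sub_le _ _
      _ ≤ Bx + By := add_le_add (hBx τ hτr) (hBy τ hτr)
  have hφ00 : φ0 = 0 := by
    have := hUcompl.disjoint
    exact (Submodule.disjoint_def.mp this) φ0 hφ0S hφ0U
  -- v solves the homogeneous equation with zero initial segment, hence v = 0
  have hvz : ∀ t, -r ≤ t → v t = 0 := by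
    have hvd' : ∀ t, 0 ≤ t → HasDerivWithinAt v
        (L t (seg d r v hv t) + (fun _ => (0:Rd d)) t) (Set.Ici 0) t := by
      intro t ht
      simpa using hvsol t ht
    have h0d : ∀ t, 0 ≤ t → HasDerivWithinAt (fun _ => (0:Rd d))
        (L t (seg d r (fun _ => (0:Rd d)) continuous_const t) + (fun _ => (0:Rd d)) t)
        (Set.Ici 0) t := by
      intro t ht
      have : L t (seg d r (fun _ => (0:Rd d)) continuous_const t) + (0:Rd d) = 0 := by
        rw [seg_zero, map_zero, add_zero]
      rw [this]
      exact hasDerivWithinAt_const t _ 0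
    have hseg00 : seg d r v hv 0 = seg d r (fun _ => (0:Rd d)) continuous_const 0 := by
      rw [hv0, hφ00, seg_zero]
    exact sol_unique hr L hL (fun _ => (0:Rd d)) v (fun _ => (0:Rd d)) hv continuous_const
      hvd' h0d hseg00
  intro t htr
  rw [hxyv t htr, hvz t htr, add_zero]

end PerronLemmas

set_option maxHeartbeats 4000000 in
set_option synthInstance.maxHeartbeats 1000000 in
/-- If Eq. x'(t) = L(t)x_t is shadowable and C = 𝒮(0) ⊕ 𝒰 with 𝒰
finite-dimensional, then for each bounded continuous z there is a unique
bounded continuous solution x of x' = L(t)x_t + z(t) with x_0 ∈ 𝒰, and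
sup_{t ≥ -r} |x(t)| ≤ A · sup_{t ≥ 0} |z(t)| for a constant A independent of z. -/
theorem stmt8 (d : ℕ) (r : ℝ) (hr : 0 ≤ r)
    (L : ℝ → (Ph d r →L[ℝ] Rd d)) (hL : ContinuousOn L (Set.Ici 0))
    (T : ℝ → ℝ → (Ph d r →L[ℝ] Ph d r))
    (hT : IsSolOp d r L T) (hcoc : Cocycle d r T)
    (hsh : Shadowable d r L)
    (U : Submodule ℝ (Ph d r)) (hUfd : FiniteDimensional ℝ ↥U)
    (hUcompl : IsCompl (stableSub d r T 0) U) :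
    ∃ A, 0 < A ∧ ∀ z : ℝ → Rd d, ContinuousOn z (Set.Ici 0) →
      (∃ B, ∀ t, 0 ≤ t → ‖z t‖ ≤ B) →
      ∃ (x : ℝ → Rd d) (hx : Continuous x),
        seg d r x hx 0 ∈ U ∧
        (∃ B, ∀ t, -r ≤ t → ‖x t‖ ≤ B) ∧
        (∀ t, 0 ≤ t → HasDerivWithinAt x (L t (seg d r x hx t) + z t) (Set.Ici 0) t) ∧
        (∀ (x' : ℝ → Rd d) (hx' : Continuous x'),
          seg d r x' hx' 0 ∈ U → (∃ B, ∀ t, -r ≤ t → ‖x' t‖ ≤ B) →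
          (∀ t, 0 ≤ t → HasDerivWithinAt x' (L t (seg d r x' hx' t) + z t) (Set.Ici 0) t) →
          ∀ t, -r ≤ t → x' t = x t) ∧
        (∀ B, (∀ t, 0 ≤ t → ‖z t‖ ≤ B) → ∀ t, -r ≤ t → ‖x t‖ ≤ A * B) := by
  classical
  set P : BoundedContinuousFunction ℝ (Rd d) → (ℝ → Rd d) → Prop := fun ζ x =>
    ∃ hx : Continuous x, seg d r x hx 0 ∈ U ∧ (∃ B', ∀ t, ‖x t‖ ≤ B') ∧
      (∀ t, 0 ≤ t → HasDerivWithinAt x (L t (seg d r x hx t) + ζ t) (Set.Ici 0) t) ∧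
      (∀ t, t ≤ -r → x t = x (-r)) with hPdef
  have hexP : ∀ ζ, ∃ x, P ζ x := by
    intro ζ
    obtain ⟨x, hx, B', h1, h2, h3, h4⟩ := exists_bounded_Usol hr L hL T hT hsh U hUcompl
      (⇑ζ) ζ.continuous ‖ζ‖ (fun t => ζ.norm_coe_le_norm t)
    exact ⟨x, hx, h1, ⟨B', h2⟩, h3, h4⟩
  have hPuniq : ∀ ζ x y, P ζ x → P ζ y → x = y := by
    rintro ζ x y ⟨hx, hxU, ⟨Bx, hBx⟩, hxd, hxc⟩ ⟨hy, hyU, ⟨By, hBy⟩, hyd, hyc⟩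
    have h := Usol_unique hr L hL T hT U hUcompl (fun t => ζ t) x y hx hy hxU hyU
      ⟨Bx, fun t _ => hBx t⟩ ⟨By, fun t _ => hBy t⟩ hxd hyd
    funext t
    rcases le_or_gt (-r) t with htr | htr
    · exact h t htr
    · rw [hxc t htr.le, hyc t htr.le]
      exact h (-r) le_rfl
  set sol : BoundedContinuousFunction ℝ (Rd d) → (ℝ → Rd d) :=
    fun ζ => (hexP ζ).choose with hsoldef
  have hsolP : ∀ ζ, P ζ (sol ζ) := fun ζ => (hexP ζ).choose_spec
  have hsolc : ∀ ζ, Continuous (sol ζ) := fun ζ => (hsolP ζ).choose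
  have hsolU : ∀ ζ, seg d r (sol ζ) (hsolc ζ) 0 ∈ U := fun ζ => (hsolP ζ).choose_spec.1
  have hsolb : ∀ ζ, ∃ B', ∀ t, ‖sol ζ t‖ ≤ B' := fun ζ => (hsolP ζ).choose_spec.2.1
  have hsold : ∀ ζ, ∀ t, 0 ≤ t → HasDerivWithinAt (sol ζ)
      (L t (seg d r (sol ζ) (hsolc ζ) t) + ζ t) (Set.Ici 0) t :=
    fun ζ => (hsolP ζ).choose_spec.2.2.1
  have hsolcl : ∀ ζ, ∀ t, t ≤ -r → sol ζ t = sol ζ (-r) :=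
    fun ζ => (hsolP ζ).choose_spec.2.2.2
  -- the solution operator as a linear map
  set Λ0 : BoundedContinuousFunction ℝ (Rd d) →ₗ[ℝ] BoundedContinuousFunction ℝ (Rd d) :=
    { toFun := fun ζ => BoundedContinuousFunction.ofNormedAddCommGroup (sol ζ) (hsolc ζ)
        (hsolb ζ).choose (hsolb ζ).choose_spec
      map_add' := by
        intro ζ1 ζ2
        have hc12 : Continuous (sol ζ1 + sol ζ2) := (hsolc ζ1).add (hsolc ζ2)
        have hP : P (ζ1 + ζ2) (sol ζ1 + sol ζ2) := by
          refine ⟨hc12, ?_, ?_, ?_, ?_⟩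
          · rw [seg_add (sol ζ1) (sol ζ2) (hsolc ζ1) (hsolc ζ2) 0]
            exact add_mem (hsolU ζ1) (hsolU ζ2)
          · obtain ⟨B1, hB1⟩ := hsolb ζ1
            obtain ⟨B2, hB2⟩ := hsolb ζ2
            exact ⟨B1 + B2, fun t =>
              le_trans (norm_add_le _ _) (add_le_add (hB1 t) (hB2 t))⟩
          · intro t ht
            have h1 := (hsold ζ1 t ht).add (hsold ζ2 t ht)
            have h2 : L t (seg d r (sol ζ1) (hsolc ζ1) t) + ζ1 t
                + (L t (seg d r (sol ζ2) (hsolc ζ2) t) + ζ2 t)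
                = L t (seg d r (sol ζ1 + sol ζ2) hc12 t) + (ζ1 + ζ2) t := by
              rw [seg_add (sol ζ1) (sol ζ2) (hsolc ζ1) (hsolc ζ2) t, map_add,
                BoundedContinuousFunction.coe_add]
              simp only [Pi.add_apply]
              abel
            rw [h2] at h1
            exact h1
          · intro t ht
            simp only [Pi.add_apply, hsolcl ζ1 t ht, hsolcl ζ2 t ht]
        have heq := hPuniq (ζ1 + ζ2) _ _ (hsolP (ζ1 + ζ2)) hP
        apply BoundedContinuousFunction.ext
        intro t
        show sol (ζ1 + ζ2) t = _
        rw [heq]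
        rfl
      map_smul' := by
        intro c ζ1
        have hcc : Continuous (c • sol ζ1) := (hsolc ζ1).const_smul c
        have hP : P (c • ζ1) (c • sol ζ1) := by
          refine ⟨hcc, ?_, ?_, ?_, ?_⟩
          · rw [seg_smul c (sol ζ1) (hsolc ζ1) 0]
            exact Submodule.smul_mem U c (hsolU ζ1)
          · obtain ⟨B1, hB1⟩ := hsolb ζ1
            refine ⟨‖c‖ * B1, fun t => ?_⟩
            show ‖c • sol ζ1 t‖ ≤ _
            rw [norm_smul]
            exact mul_le_mul_of_nonneg_left (hB1 t) (norm_nonneg c)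
          · intro t ht
            have h1 := (hsold ζ1 t ht).const_smul c
            have h2 : c • (L t (seg d r (sol ζ1) (hsolc ζ1) t) + ζ1 t)
                = L t (seg d r (c • sol ζ1) hcc t) + (c • ζ1) t := by
              rw [seg_smul c (sol ζ1) (hsolc ζ1) t, map_smul,
                BoundedContinuousFunction.coe_smul]
              simp only [Pi.smul_apply, smul_add]
            rw [h2] at h1
            exact h1
          · intro t ht
            simp only [Pi.smul_apply, hsolcl ζ1 t ht]
        have heq := hPuniq (c • ζ1) _ _ (hsolP (c • ζ1)) hP
        apply BoundedContinuousFunction.ext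
        intro t
        show sol (c • ζ1) t = _
        rw [heq]
        rfl } with hΛ0def
  have hΛ0app : ∀ ζ t, (Λ0 ζ) t = sol ζ t := fun ζ t => rfl
  -- closed graph
  have hUclosed : IsClosed (U : Set (Ph d r)) := Submodule.closed_of_finiteDimensional U
  have hgraph : IsClosed (Λ0.graph : Set (BoundedContinuousFunction ℝ (Rd d)
      × BoundedContinuousFunction ℝ (Rd d))) := by
    apply IsSeqClosed.isClosed
    intro u p hu hup
    rw [SetLike.mem_coe, LinearMap.mem_graph_iff]
    have hu' : ∀ n, (u n).2 = Λ0 (u n).1 := by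
      intro n
      have := hu n
      rw [SetLike.mem_coe, LinearMap.mem_graph_iff] at this
      exact this
    set ζn : ℕ → BoundedContinuousFunction ℝ (Rd d) := fun n => (u n).1 with hζndef
    set ξ : BoundedContinuousFunction ℝ (Rd d) := p.2 with hξdef
    have hζtend : Filter.Tendsto ζn Filter.atTop (nhds p.1) := hup.fst_nhds
    have hxtend : Filter.Tendsto (fun n => Λ0 (ζn n)) Filter.atTop (nhds ξ) := by
      have h1 : Filter.Tendsto (fun n => (u n).2) Filter.atTop (nhds p.2) := hup.snd_nhds
      exact h1.congr fun n => hu' n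
    have hdn : Filter.Tendsto (fun n => dist (Λ0 (ζn n)) ξ) Filter.atTop (nhds 0) :=
      tendsto_iff_dist_tendsto_zero.mp hxtend
    have hen : Filter.Tendsto (fun n => dist (ζn n) p.1) Filter.atTop (nhds 0) :=
      tendsto_iff_dist_tendsto_zero.mp hζtend
    have hptw : ∀ t, Filter.Tendsto (fun n => sol (ζn n) t) Filter.atTop (nhds (ξ t)) := by
      intro t
      rw [tendsto_iff_dist_tendsto_zero]
      apply squeeze_zero (fun n => dist_nonneg) (fun n => ?_) hdn
      have h2 := BoundedContinuousFunction.dist_coe_le_dist (f := Λ0 (ζn n)) (g := ξ) t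
      rw [hΛ0app] at h2
      exact h2
    have hsegdist : ∀ (n : ℕ) (s : ℝ),
        ‖seg d r (sol (ζn n)) (hsolc (ζn n)) s - seg d r (⇑ξ) ξ.continuous s‖
          ≤ dist (Λ0 (ζn n)) ξ := by
      intro n s
      rw [← seg_sub (sol (ζn n)) (⇑ξ) (hsolc _) ξ.continuous s]
      apply norm_seg_le _ _ _ _ dist_nonneg
      intro τ _ _
      show ‖sol (ζn n) τ - ξ τ‖ ≤ _
      rw [← dist_eq_norm]
      calc dist (sol (ζn n) τ) (ξ τ) = dist ((Λ0 (ζn n)) τ) (ξ τ) := by rw [hΛ0app]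
        _ ≤ dist (Λ0 (ζn n)) ξ := BoundedContinuousFunction.dist_coe_le_dist τ
    have hζdist : ∀ (n : ℕ) (s : ℝ), ‖ζn n s - p.1 s‖ ≤ dist (ζn n) p.1 := by
      intro n s
      rw [← dist_eq_norm]
      exact BoundedContinuousFunction.dist_coe_le_dist s
    have hsegtend : ∀ t, Filter.Tendsto (fun n => seg d r (sol (ζn n)) (hsolc (ζn n)) t)
        Filter.atTop (nhds (seg d r (⇑ξ) ξ.continuous t)) := by
      intro t
      rw [tendsto_iff_dist_tendsto_zero]
      apply squeeze_zero (fun n => dist_nonneg) (fun n => ?_) hdn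
      rw [dist_eq_norm]
      exact hsegdist n t
    have hξU : seg d r (⇑ξ) ξ.continuous 0 ∈ U := by
      apply hUclosed.mem_of_tendsto (hsegtend 0)
      exact Filter.Eventually.of_forall (fun n => hsolU (ζn n))
    have hξcl : ∀ t, t ≤ -r → ξ t = ξ (-r) := by
      intro t ht
      exact tendsto_nhds_unique (hptw t)
        ((hptw (-r)).congr (fun n => (hsolcl (ζn n) t ht).symm))
    have hξint : ∀ t, 0 ≤ t → ξ t = ξ 0
        + ∫ s in (0:ℝ)..t, (L s (seg d r (⇑ξ) ξ.continuous s) + p.1 s) := by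
      intro t ht
      have hKex : ∃ K, ∀ s ∈ Set.Icc (0:ℝ) t, ‖L s‖ ≤ K :=
        IsCompact.exists_bound_of_continuousOn (f := L) isCompact_Icc
          (hL.mono Set.Icc_subset_Ici_self)
      obtain ⟨K, hK⟩ := hKex
      set K' := max K 0 with hK'def
      have hK'0 : (0:ℝ) ≤ K' := le_max_right _ _
      have hKb : ∀ s ∈ Set.Icc (0:ℝ) t, ‖L s‖ ≤ K' :=
        fun s hs => le_trans (hK s hs) (le_max_left _ _)
      have hsub : Set.uIcc (0:ℝ) t ⊆ Set.Ici 0 := by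
        rw [Set.uIcc_of_le ht]; exact fun v hv => hv.1
      have hint_n : ∀ n, sol (ζn n) t = sol (ζn n) 0
          + ∫ s in (0:ℝ)..t, (L s (seg d r (sol (ζn n)) (hsolc (ζn n)) s) + ζn n s) :=
        fun n => sol_integral L hL (⇑(ζn n)) (ζn n).continuous.continuousOn
          (sol (ζn n)) (hsolc (ζn n)) (hsold (ζn n)) t ht
      have hFn_cont : ∀ n, ContinuousOn
          (fun s => L s (seg d r (sol (ζn n)) (hsolc (ζn n)) s) + ζn n s) (Set.Ici 0) :=
        fun n => (hL.clm_apply (continuous_seg _ (hsolc (ζn n))).continuousOn).add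
          (ζn n).continuous.continuousOn
      have hF_cont : ContinuousOn
          (fun s => L s (seg d r (⇑ξ) ξ.continuous s) + p.1 s) (Set.Ici 0) :=
        (hL.clm_apply (continuous_seg _ ξ.continuous).continuousOn).add
          p.1.continuous.continuousOn
      have hIn : Filter.Tendsto
          (fun n => ∫ s in (0:ℝ)..t, (L s (seg d r (sol (ζn n)) (hsolc (ζn n)) s) + ζn n s))
          Filter.atTop
          (nhds (∫ s in (0:ℝ)..t, (L s (seg d r (⇑ξ) ξ.continuous s) + p.1 s))) := by
        rw [tendsto_iff_dist_tendsto_zero]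
        have hlim : Filter.Tendsto (fun n => (K' * dist (Λ0 (ζn n)) ξ + dist (ζn n) p.1) * |t|)
            Filter.atTop (nhds 0) := by
          have h1 : Filter.Tendsto (fun n => K' * dist (Λ0 (ζn n)) ξ + dist (ζn n) p.1)
              Filter.atTop (nhds (K' * 0 + 0)) := ((hdn.const_mul K').add hen)
          have h2 := h1.mul_const |t|
          simpa using h2
        apply squeeze_zero (fun n => dist_nonneg) (fun n => ?_) hlim
        rw [dist_eq_norm, ← intervalIntegral.integral_sub
          (((hFn_cont n).mono hsub).intervalIntegrable)
          ((hF_cont.mono hsub).intervalIntegrable)]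
        have hbd : ∀ s ∈ Set.uIoc (0:ℝ) t,
            ‖(L s (seg d r (sol (ζn n)) (hsolc (ζn n)) s) + ζn n s)
              - (L s (seg d r (⇑ξ) ξ.continuous s) + p.1 s)‖
            ≤ K' * dist (Λ0 (ζn n)) ξ + dist (ζn n) p.1 := by
          intro s hs
          rw [Set.uIoc_of_le ht] at hs
          have hs0 : (0:ℝ) ≤ s := hs.1.le
          have e1 : (L s (seg d r (sol (ζn n)) (hsolc (ζn n)) s) + ζn n s)
              - (L s (seg d r (⇑ξ) ξ.continuous s) + p.1 s)
              = L s (seg d r (sol (ζn n)) (hsolc (ζn n)) s - seg d r (⇑ξ) ξ.continuous s)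
                + (ζn n s - p.1 s) := by
            rw [map_sub]
            abel
          rw [e1]
          refine le_trans (norm_add_le _ _) (add_le_add ?_ (hζdist n s))
          calc ‖L s (seg d r (sol (ζn n)) (hsolc (ζn n)) s - seg d r (⇑ξ) ξ.continuous s)‖
              ≤ ‖L s‖ * ‖seg d r (sol (ζn n)) (hsolc (ζn n)) s - seg d r (⇑ξ) ξ.continuous s‖ :=
                (L s).le_opNorm _
            _ ≤ K' * dist (Λ0 (ζn n)) ξ :=
                mul_le_mul (hKb s ⟨hs0, hs.2⟩) (hsegdist n s) (norm_nonneg _) hK'0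
        have := intervalIntegral.norm_integral_le_of_norm_le_const hbd
        simpa using this
      have hlhs : Filter.Tendsto (fun n => sol (ζn n) t) Filter.atTop
          (nhds (ξ 0 + ∫ s in (0:ℝ)..t, (L s (seg d r (⇑ξ) ξ.continuous s) + p.1 s))) :=
        (((hptw 0).add hIn).congr (fun n => (hint_n n).symm))
      exact tendsto_nhds_unique (hptw t) hlhs
    have hξd : ∀ t, 0 ≤ t → HasDerivWithinAt (⇑ξ)
        (L t (seg d r (⇑ξ) ξ.continuous t) + p.1 t) (Set.Ici 0) t := by
      intro t ht
      have hGc : Continuous (fun s => L (max s 0) (seg d r (⇑ξ) ξ.continuous s) + p.1 s) := by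
        have hLc2 : Continuous (fun s : ℝ => L (max s 0)) :=
          hL.comp_continuous (g := L) (f := fun s : ℝ => max s 0)
            (continuous_id.max continuous_const) (fun s => Set.mem_Ici.mpr (le_max_right _ _))
        exact (hLc2.clm_apply (continuous_seg _ ξ.continuous)).add p.1.continuous
      have hGeq : ∀ s, 0 ≤ s → L (max s 0) (seg d r (⇑ξ) ξ.continuous s) + p.1 s
          = L s (seg d r (⇑ξ) ξ.continuous s) + p.1 s := fun s hs => by rw [max_eq_left hs]
      have hint_eq : ∀ v, 0 ≤ v → ξ v = ξ 0
          + ∫ s in (0:ℝ)..v, (L (max s 0) (seg d r (⇑ξ) ξ.continuous s) + p.1 s) := by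
        intro v hv
        rw [hξint v hv]
        congr 1
        apply intervalIntegral.integral_congr
        intro s hs
        rw [Set.uIcc_of_le hv] at hs
        exact (hGeq s hs.1).symm
      have h1 : HasDerivAt
          (fun v => ξ 0 + ∫ s in (0:ℝ)..v, (L (max s 0) (seg d r (⇑ξ) ξ.continuous s) + p.1 s))
          (L (max t 0) (seg d r (⇑ξ) ξ.continuous t) + p.1 t) t :=
        ((hGc.integral_hasStrictDerivAt 0 t).hasDerivAt).const_add (ξ 0)
      have h2 := h1.hasDerivWithinAt.congr (fun v hv => hint_eq v hv) (hint_eq t ht)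
      rw [hGeq t ht] at h2
      exact h2
    have hPξ : P p.1 (⇑ξ) :=
      ⟨ξ.continuous, hξU, ⟨‖ξ‖, fun t => ξ.norm_coe_le_norm t⟩, hξd, hξcl⟩
    have heq := hPuniq p.1 _ _ (hsolP p.1) hPξ
    apply BoundedContinuousFunction.ext
    intro t
    show ξ t = (Λ0 p.1) t
    rw [hΛ0app, heq]
  have hΛcont : Continuous Λ0 := Λ0.continuous_of_isClosed_graph hgraph
  set Λcl : BoundedContinuousFunction ℝ (Rd d) →L[ℝ] BoundedContinuousFunction ℝ (Rd d) :=
    ⟨Λ0, hΛcont⟩ with hΛcldef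
  refine ⟨‖Λcl‖ + 1, by positivity, ?_⟩
  intro z hz hbz
  obtain ⟨B0, hB0⟩ := hbz
  have hzc : Continuous (fun t => z (max t 0)) :=
    hz.comp_continuous (g := z) (f := fun t : ℝ => max t 0)
      (continuous_id.max continuous_const) (fun t => Set.mem_Ici.mpr (le_max_right _ _))
  set ζ : BoundedContinuousFunction ℝ (Rd d) :=
    BoundedContinuousFunction.ofNormedAddCommGroup _ hzc B0
      (fun t => hB0 (max t 0) (le_max_right _ _)) with hζdef
  have hζapp' : ∀ t, 0 ≤ t → ζ t = z t := fun t ht => by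
    show z (max t 0) = z t
    rw [max_eq_left ht]
  have hxd : ∀ t, 0 ≤ t → HasDerivWithinAt (sol ζ)
      (L t (seg d r (sol ζ) (hsolc ζ) t) + z t) (Set.Ici 0) t := by
    intro t ht
    have h1 := hsold ζ t ht
    rwa [hζapp' t ht] at h1
  obtain ⟨B', hB'⟩ := hsolb ζ
  refine ⟨sol ζ, hsolc ζ, hsolU ζ, ⟨B', fun t _ => hB' t⟩, hxd, ?_, ?_⟩
  · intro x' hx' hx'U hx'b hx'd
    exact Usol_unique hr L hL T hT U hUcompl z x' (sol ζ) hx' (hsolc ζ) hx'U (hsolU ζ)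
      hx'b ⟨B', fun t _ => hB' t⟩ hx'd hxd
  · intro B hB t htr
    have hB0' : (0:ℝ) ≤ B := le_trans (norm_nonneg (z 0)) (hB 0 le_rfl)
    have hζB : ‖ζ‖ ≤ B := by
      apply (BoundedContinuousFunction.norm_le hB0').2
      intro t'
      show ‖z (max t' 0)‖ ≤ B
      exact hB (max t' 0) (le_max_right _ _)
    have h1 : ‖sol ζ t‖ ≤ ‖Λ0 ζ‖ := by
      rw [← hΛ0app ζ t]
      exact BoundedContinuousFunction.norm_coe_le_norm _ t
    have h2 : ‖Λ0 ζ‖ = ‖Λcl ζ‖ := rfl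
    have h3 : ‖Λcl ζ‖ ≤ ‖Λcl‖ * ‖ζ‖ := Λcl.le_opNorm ζ
    have h4 : ‖Λcl‖ * ‖ζ‖ ≤ (‖Λcl‖ + 1) * B := by
      apply mul_le_mul ?_ hζB (norm_nonneg ζ) ?_
      · linarith [norm_nonneg Λcl]
      · positivity
    linarith [h2 ▸ h1]

end
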